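/- For every x ∈ 𝔄 one has (x²·x²)·y = -4·x·(x²·(x·y)) for all y ∈ 𝔄; equivalently, the operator identity L_{x²x²} = -4LUL holds. -/
import Mathlib


/-- 𝔄 is a commutative (not necessarily associative) algebra over a field `F` of
characteristic ≠ 2, 3, satisfying the identities `x⁴ = 0` and `x(x²x²) = 0`. -/
theorem stmt_14 {F A : Type*} [Field F] [NonUnitalNonAssocRing A]
    [Module F A] [SMulCommClass F A A] [IsScalarTower F A A]
    (hcomm : ∀ a b : A, a * b = b * a)
    (h2 : (2 : F) ≠ 0) (h3 : (3 : F) ≠ 0)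
    (hx4 : ∀ x : A, x * (x * (x * x)) = 0)
    (hx5 : ∀ x : A, x * ((x * x) * (x * x)) = 0)
    (x y : A) :
    ((x * x) * (x * x)) * y = ((-4 : ℤ) • (x * (x * x * (x * (y))))) := by
  have hP : ∀ t : F, (x + t•y) * (((x + t•y)*(x + t•y)) * ((x + t•y)*(x + t•y))) = 0 :=
    fun t => hx5 _
  have key : (12:F) • (((x*x)*(x*x))*y + (4:F) • (x * (x*x * (x*y)))) =
      (8:F) • ((x + (1:F)•y) * (((x + (1:F)•y)*(x + (1:F)•y)) * ((x + (1:F)•y)*(x + (1:F)•y)))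
        - (x + (-1:F)•y) * (((x + (-1:F)•y)*(x + (-1:F)•y)) * ((x + (-1:F)•y)*(x + (-1:F)•y))))
      - ((x + (2:F)•y) * (((x + (2:F)•y)*(x + (2:F)•y)) * ((x + (2:F)•y)*(x + (2:F)•y)))
        - (x + (-2:F)•y) * (((x + (-2:F)•y)*(x + (-2:F)•y)) * ((x + (-2:F)•y)*(x + (-2:F)•y)))) := by
    simp only [mul_add, add_mul, smul_mul_assoc, mul_smul_comm, smul_smul, smul_add, smul_sub, hcomm]
    simp only [hx5, smul_zero, add_zero, zero_add, sub_zero, zero_sub, neg_zero]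
    module
  rw [hP 1, hP (-1), hP 2, hP (-2)] at key
  simp only [sub_zero, smul_zero, sub_self] at key
  have h12 : (12:F) ≠ 0 := by
    have : (12:F) = 2*2*3 := by norm_num
    rw [this]; exact mul_ne_zero (mul_ne_zero h2 h2) h3
  have key2 : ((x*x)*(x*x))*y + (4:F) • (x * (x*x * (x*y))) = 0 :=
    (smul_eq_zero.mp key).resolve_left h12
  have : ((-4:ℤ) : F) • (x * (x * x * (x * y))) = (-4:ℤ) • (x * (x * x * (x * y))) :=
    Int.cast_smul_eq_zsmul F _ _
  rw [← this]
  push_cast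
  rw [eq_comm, neg_smul, neg_eq_iff_add_eq_zero, add_comm]
  exact key2
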